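/- arXiv:math/0112056 — 5 statements merged into one kernel-verified Lean document; each statement's English description precedes it below -/
import Mathlib

section
/- Let (a_n)_{n≥0} be a sequence of real numbers, let k be a positive integer, α ∈ ℝ and β > 1, and suppose there is a sequence (r_n) with r_n → 0 such that a_n = α + (2/(n−k+1))·Σ_{j=0}^{n−k} (j/n)^β·a_j + r_n for all n ≥ k. Then (a_n) converges and lim_{n→∞} a_n = α·(β+1)/(β−1). -/
open Filter Finset
open scoped Topology

lemma sum_rpow_le_aux (β : ℝ) (hβ : 0 < β) (m : ℕ) :
    ∑ j ∈ Finset.range (m + 1), (j : ℝ) ^ β ≤ ((m : ℝ) + 1) ^ (β + 1) / (β + 1) := by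
  have hmono : MonotoneOn (fun x : ℝ => x ^ β) (Set.Icc (0:ℝ) (0 + (m+1 : ℕ))) := by
    intro x hx y hy hxy
    exact Real.rpow_le_rpow hx.1 hxy hβ.le
  have := hmono.sum_le_integral
  simp only [zero_add] at this
  calc ∑ j ∈ Finset.range (m + 1), (j : ℝ) ^ β ≤ ∫ x in (0:ℝ)..((m+1 : ℕ) : ℝ), x ^ β := this
    _ = ((m : ℝ) + 1) ^ (β + 1) / (β + 1) := by
        rw [integral_rpow (Or.inl (by linarith))]
        rw [Real.zero_rpow (by linarith)]
        push_cast; ring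

lemma integral_le_sum_rpow_aux (β : ℝ) (hβ : 0 < β) (m : ℕ) :
    (m : ℝ) ^ (β + 1) / (β + 1) ≤ ∑ j ∈ Finset.range (m + 1), (j : ℝ) ^ β := by
  have hmono : MonotoneOn (fun x : ℝ => x ^ β) (Set.Icc (0:ℝ) (0 + (m : ℕ))) := by
    intro x hx y hy hxy
    exact Real.rpow_le_rpow hx.1 hxy hβ.le
  have h1 := hmono.integral_le_sum
  simp only [zero_add] at h1
  have h2 : (m : ℝ) ^ (β + 1) / (β + 1) = ∫ x in (0:ℝ)..(m : ℝ), x ^ β := by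
    rw [integral_rpow (Or.inl (by linarith))]
    rw [Real.zero_rpow (by linarith)]; ring
  rw [h2]
  refine h1.trans ?_
  rw [Finset.sum_range_succ']
  simp only [Nat.cast_zero]
  rw [Real.zero_rpow hβ.ne']
  push_cast
  simp

lemma W_upper (β : ℝ) (hβ : 1 < β) (k n : ℕ) (hk : 0 < k) (hn : k ≤ n) :
    (2 / ((n : ℝ) - k + 1)) * ∑ j ∈ Finset.range (n - k + 1), ((j : ℝ) / (n : ℝ)) ^ β
      ≤ (2 / (β + 1)) * (((n : ℝ) - k + 1) / n) ^ β := by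
  have hn0 : 0 < n := lt_of_lt_of_le hk hn
  have hnR : (0:ℝ) < n := by exact_mod_cast hn0
  have hm : ((n - k : ℕ) : ℝ) = (n : ℝ) - k := by rw [Nat.cast_sub hn]
  have hβ0 : (0:ℝ) < β := by linarith
  rw [← hm]
  set m := n - k with hmdef
  have hm1 : (0:ℝ) < (m : ℝ) + 1 := by positivity
  have hsum : ∑ j ∈ Finset.range (m + 1), ((j : ℝ) / (n : ℝ)) ^ β
      = (∑ j ∈ Finset.range (m + 1), (j : ℝ) ^ β) / (n : ℝ) ^ β := by
    rw [Finset.sum_div]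
    refine Finset.sum_congr rfl fun j _ => ?_
    rw [Real.div_rpow (Nat.cast_nonneg j) hnR.le]
  have key := sum_rpow_le_aux β hβ0 m
  have hnb : (0:ℝ) < (n : ℝ) ^ β := Real.rpow_pos_of_pos hnR β
  have e1 : ((m:ℝ)+1)^(β+1) = ((m:ℝ)+1)^β * ((m:ℝ)+1) := Real.rpow_add_one hm1.ne' β
  have e2 : (((m:ℝ)+1)/(n:ℝ))^β = ((m:ℝ)+1)^β/(n:ℝ)^β := Real.div_rpow hm1.le hnR.le β
  rw [hsum, e2]
  calc (2 / ((m:ℝ) + 1)) * ((∑ j ∈ Finset.range (m + 1), (j : ℝ) ^ β) / (n : ℝ) ^ β)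
      ≤ (2 / ((m:ℝ) + 1)) * ((((m:ℝ)+1)^(β+1)/(β+1)) / (n : ℝ) ^ β) := by
        gcongr
    _ = (2 / (β + 1)) * (((m:ℝ)+1)^β / (n:ℝ)^β) := by
        rw [e1]; field_simp

lemma W_lower (β : ℝ) (hβ : 1 < β) (k n : ℕ) (hk : 0 < k) (hn : k ≤ n) :
    (2 / (β + 1)) * (((n : ℝ) - k) / n) ^ β * (((n : ℝ) - k) / ((n : ℝ) - k + 1))
      ≤ (2 / ((n : ℝ) - k + 1)) * ∑ j ∈ Finset.range (n - k + 1), ((j : ℝ) / (n : ℝ)) ^ β := by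
  have hn0 : 0 < n := lt_of_lt_of_le hk hn
  have hnR : (0:ℝ) < n := by exact_mod_cast hn0
  have hm : ((n - k : ℕ) : ℝ) = (n : ℝ) - k := by rw [Nat.cast_sub hn]
  have hβ0 : (0:ℝ) < β := by linarith
  rw [← hm]
  set m := n - k with hmdef
  have hm0 : (0:ℝ) ≤ (m : ℝ) := Nat.cast_nonneg m
  have hm1 : (0:ℝ) < (m : ℝ) + 1 := by positivity
  have hsum : ∑ j ∈ Finset.range (m + 1), ((j : ℝ) / (n : ℝ)) ^ β
      = (∑ j ∈ Finset.range (m + 1), (j : ℝ) ^ β) / (n : ℝ) ^ β := by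
    rw [Finset.sum_div]
    refine Finset.sum_congr rfl fun j _ => ?_
    rw [Real.div_rpow (Nat.cast_nonneg j) hnR.le]
  have key := integral_le_sum_rpow_aux β hβ0 m
  have hnb : (0:ℝ) < (n : ℝ) ^ β := Real.rpow_pos_of_pos hnR β
  have e1 : (m:ℝ)^(β+1) = (m:ℝ)^β * (m:ℝ) := by
    rcases Nat.eq_zero_or_pos m with h0 | hpos
    · rw [h0]; simp [Real.zero_rpow, hβ0.ne', (by linarith : β + 1 ≠ 0)]
    · have : (0:ℝ) < (m:ℝ) := by exact_mod_cast hpos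
      exact Real.rpow_add_one this.ne' β
  have e2 : ((m:ℝ)/(n:ℝ))^β = (m:ℝ)^β/(n:ℝ)^β := Real.div_rpow hm0 hnR.le β
  rw [hsum, e2]
  calc (2 / (β + 1)) * ((m:ℝ)^β / (n:ℝ)^β) * ((m:ℝ) / ((m:ℝ) + 1))
      = (2 / ((m:ℝ) + 1)) * (((m:ℝ)^(β+1)/(β+1)) / (n : ℝ) ^ β) := by
        rw [e1]; field_simp
    _ ≤ (2 / ((m:ℝ) + 1)) * ((∑ j ∈ Finset.range (m + 1), (j : ℝ) ^ β) / (n : ℝ) ^ β) := by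
        gcongr

lemma W_tendsto (β : ℝ) (hβ : 1 < β) (k : ℕ) (hk : 0 < k) :
    Tendsto (fun n : ℕ => (2 / ((n : ℝ) - k + 1)) *
        ∑ j ∈ Finset.range (n - k + 1), ((j : ℝ) / (n : ℝ)) ^ β)
      atTop (𝓝 (2 / (β + 1))) := by
  have hrc : ContinuousAt (fun x : ℝ => x ^ β) 1 :=
    Real.continuousAt_rpow_const 1 β (Or.inl one_ne_zero)
  have h1 : Tendsto (fun n : ℕ => ((n : ℝ) - k + 1) / n) atTop (𝓝 1) := by
    have h0 : Tendsto (fun n : ℕ => 1 + (1 - (k : ℝ)) / n) atTop (𝓝 (1 + 0)) :=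
      tendsto_const_nhds.add (tendsto_const_div_atTop_nhds_zero_nat _)
    rw [add_zero] at h0
    refine h0.congr' ?_
    filter_upwards [eventually_ge_atTop 1] with n hn
    have : (n : ℝ) ≠ 0 := by positivity
    field_simp
    ring
  have h2 : Tendsto (fun n : ℕ => ((n : ℝ) - k) / n) atTop (𝓝 1) := by
    have h0 : Tendsto (fun n : ℕ => 1 + (-(k : ℝ)) / n) atTop (𝓝 (1 + 0)) :=
      tendsto_const_nhds.add (tendsto_const_div_atTop_nhds_zero_nat _)
    rw [add_zero] at h0
    refine h0.congr' ?_
    filter_upwards [eventually_ge_atTop 1] with n hn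
    have : (n : ℝ) ≠ 0 := by positivity
    field_simp
    ring
  have hd : Tendsto (fun n : ℕ => (n : ℝ) + (1 - (k : ℝ))) atTop atTop :=
    tendsto_atTop_add_const_right _ _ tendsto_natCast_atTop_atTop
  have h3 : Tendsto (fun n : ℕ => ((n : ℝ) - k) / ((n : ℝ) - k + 1)) atTop (𝓝 1) := by
    have h0 : Tendsto (fun n : ℕ => 1 - ((n : ℝ) + (1 - (k : ℝ)))⁻¹) atTop (𝓝 (1 - 0)) :=
      tendsto_const_nhds.sub hd.inv_tendsto_atTop
    rw [sub_zero] at h0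
    refine h0.congr' ?_
    filter_upwards [eventually_ge_atTop k] with n hn
    have hkn : (k : ℝ) ≤ (n : ℝ) := by exact_mod_cast hn
    have hne : (n : ℝ) - k + 1 ≠ 0 := by linarith
    have hne2 : (n : ℝ) + (1 - (k : ℝ)) ≠ 0 := by intro hc; apply hne; linarith
    field_simp
    ring
  have hU : Tendsto (fun n : ℕ => (2 / (β + 1)) * (((n : ℝ) - k + 1) / n) ^ β)
      atTop (𝓝 (2 / (β + 1))) := by
    have := (hrc.tendsto.comp h1)
    rw [Real.one_rpow] at this
    simpa using this.const_mul (2 / (β + 1))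
  have hL : Tendsto (fun n : ℕ => (2 / (β + 1)) * (((n : ℝ) - k) / n) ^ β *
      (((n : ℝ) - k) / ((n : ℝ) - k + 1))) atTop (𝓝 (2 / (β + 1))) := by
    have h2' := (hrc.tendsto.comp h2)
    rw [Real.one_rpow] at h2'
    have := (h2'.const_mul (2 / (β + 1))).mul h3
    simpa using this
  refine tendsto_of_tendsto_of_tendsto_of_le_of_le' hL hU ?_ ?_
  · filter_upwards [eventually_ge_atTop k] with n hn
    exact W_lower β hβ k n hk hn
  · filter_upwards [eventually_ge_atTop k] with n hn
    exact W_upper β hβ k n hk hn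

set_option maxHeartbeats 1000000

/-- **Lemma 2.1, first part.** If `a_n = α + (2/(n-k+1)) Σ_{j=0}^{n-k} (j/n)^β a_j + o(1)`
with `β > 1`, then `a_n → α (β+1)/(β-1)`. -/
theorem seq_limit_of_recursion
    (a : ℕ → ℝ) (k : ℕ) (hk : 0 < k) (α β : ℝ) (hβ : 1 < β)
    (r : ℕ → ℝ) (hr : Tendsto r atTop (𝓝 0))
    (h : ∀ n : ℕ, k ≤ n →
      a n = α + (2 / ((n : ℝ) - (k : ℝ) + 1)) *
        ∑ j ∈ Finset.range (n - k + 1), ((j : ℝ) / (n : ℝ)) ^ β * a j + r n) :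
    Tendsto a atTop (𝓝 (α * (β + 1) / (β - 1))) := by
  have hβ1 : (0:ℝ) < β + 1 := by linarith
  set c : ℝ := 2 / (β + 1) with hc_def
  have hc0 : 0 < c := by positivity
  have hc1 : c < 1 := by rw [hc_def, div_lt_one hβ1]; linarith
  set L : ℝ := α * (β + 1) / (β - 1) with hL_def
  have hLfix : α = (1 - c) * L := by
    rw [hc_def, hL_def]
    have h1 : β - 1 ≠ 0 := by linarith
    have h2 : β + 1 ≠ 0 := by linarith
    field_simp
    ring
  set W : ℕ → ℝ := fun n => (2 / ((n : ℝ) - k + 1)) *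
    ∑ j ∈ Finset.range (n - k + 1), ((j : ℝ) / (n : ℝ)) ^ β with hW_def
  have hden : ∀ n : ℕ, k ≤ n → (0:ℝ) < (n : ℝ) - k + 1 := by
    intro n hn
    have : (k : ℝ) ≤ n := by exact_mod_cast hn
    linarith
  have hnpos : ∀ n : ℕ, k ≤ n → (0:ℝ) < n := by
    intro n hn
    have : (0:ℕ) < n := lt_of_lt_of_le hk hn
    exact_mod_cast this
  have hwnn : ∀ (n j : ℕ), 0 ≤ ((j : ℝ) / (n : ℝ)) ^ β :=
    fun n j => Real.rpow_nonneg (by positivity) β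
  have hwle1 : ∀ (n j : ℕ), k ≤ n → j ≤ n - k → ((j : ℝ) / (n : ℝ)) ^ β ≤ 1 := by
    intro n j hn hj
    apply Real.rpow_le_one (by positivity) _ (by linarith)
    rw [div_le_one (hnpos n hn)]
    have : j ≤ n := le_trans hj (Nat.sub_le n k)
    exact_mod_cast this
  have hWle : ∀ n, k ≤ n → W n ≤ c := by
    intro n hn
    refine (W_upper β hβ k n hk hn).trans ?_
    rw [hc_def]
    have hle1 : ((n : ℝ) - k + 1) / n ≤ 1 := by
      rw [div_le_one (hnpos n hn)]
      have : (1:ℝ) ≤ k := by exact_mod_cast hk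
      linarith
    have := Real.rpow_le_one (div_nonneg (hden n hn).le (hnpos n hn).le) hle1 (by linarith : (0:ℝ) ≤ β)
    nlinarith [this]
  have hWnn : ∀ n, k ≤ n → 0 ≤ W n := by
    intro n hn
    have := hden n hn
    have : (0:ℝ) ≤ 2 / ((n : ℝ) - k + 1) := by positivity
    exact mul_nonneg this (Finset.sum_nonneg fun j _ => hwnn n j)
  have hWtd : Tendsto W atTop (𝓝 c) := W_tendsto β hβ k hk
  -- bound on r
  obtain ⟨R, hR⟩ : ∃ R : ℝ, ∀ n, |r n| ≤ R := by
    have h1 : Tendsto (fun n => |r n|) atTop (𝓝 |0|) := hr.abs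
    obtain ⟨R, hR⟩ := h1.bddAbove_range
    exact ⟨R, fun n => hR ⟨n, rfl⟩⟩
  have hR0 : 0 ≤ R := le_trans (abs_nonneg _) (hR 0)
  -- key estimate
  have key_est : ∀ (n : ℕ), k ≤ n → ∀ (g : ℕ → ℝ) (B : ℝ), 0 ≤ B →
      (∀ j, j ≤ n - k → |g j| ≤ B) →
      |(2 / ((n : ℝ) - k + 1)) *
        ∑ j ∈ Finset.range (n - k + 1), ((j : ℝ) / (n : ℝ)) ^ β * g j| ≤ c * B := by
    intro n hn g B hB hg
    have hd := hden n hn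
    rw [abs_mul, abs_of_pos (div_pos two_pos hd)]
    calc 2 / ((n : ℝ) - k + 1) * |∑ j ∈ Finset.range (n - k + 1), ((j : ℝ) / (n : ℝ)) ^ β * g j|
        ≤ 2 / ((n : ℝ) - k + 1) * ∑ j ∈ Finset.range (n - k + 1), ((j : ℝ) / (n : ℝ)) ^ β * B := by
          gcongr
          refine (Finset.abs_sum_le_sum_abs _ _).trans ?_
          refine Finset.sum_le_sum fun j hj => ?_
          rw [abs_mul, abs_of_nonneg (hwnn n j)]
          exact mul_le_mul_of_nonneg_left
            (hg j (by have := Finset.mem_range.mp hj; omega)) (hwnn n j)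
      _ = W n * B := by rw [hW_def]; rw [← Finset.sum_mul]; ring
      _ ≤ c * B := mul_le_mul_of_nonneg_right (hWle n hn) hB
  -- boundedness of a
  obtain ⟨M, hM0, hM⟩ : ∃ M : ℝ, 0 < M ∧ ∀ n, |a n| ≤ M := by
    have h1c : (0:ℝ) < 1 - c := by linarith
    have hdiv : (0:ℝ) ≤ (|α| + R) / (1 - c) := div_nonneg (by positivity) h1c.le
    have hsum0 : (0:ℝ) ≤ ∑ j ∈ Finset.range k, |a j| :=
      Finset.sum_nonneg fun j _ => abs_nonneg _
    refine ⟨(∑ j ∈ Finset.range k, |a j|) + (|α| + R) / (1 - c) + 1, by linarith, ?_⟩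
    set M := (∑ j ∈ Finset.range k, |a j|) + (|α| + R) / (1 - c) + 1 with hMdef
    have hM1 : (|α| + R) / (1 - c) ≤ M := by
      have : (0:ℝ) ≤ ∑ j ∈ Finset.range k, |a j| :=
        Finset.sum_nonneg fun j _ => abs_nonneg _
      rw [hMdef]; linarith
    have hMpos : 0 ≤ M := le_trans hdiv hM1
    intro n
    induction n using Nat.strong_induction_on with
    | _ n ih =>
      rcases lt_or_ge n k with hnk | hnk
      · have h1 : |a n| ≤ ∑ j ∈ Finset.range k, |a j| :=
          Finset.single_le_sum (fun j _ => abs_nonneg (a j)) (Finset.mem_range.mpr hnk)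
        rw [hMdef]; linarith
      · have hrec := h n hnk
        have hT := key_est n hnk a M hMpos (fun j hj => ih j (by omega))
        have : |a n| ≤ |α| + c * M + R := by
          rw [hrec]
          refine (abs_add_le _ _).trans ?_
          refine add_le_add ((abs_add_le _ _).trans (add_le_add_right hT _)) (hR n)
        have hMineq : |α| + R ≤ (1 - c) * M := by
          rw [div_le_iff₀ h1c] at hM1
          nlinarith [hM1]
        nlinarith
  -- define b and e
  set b : ℕ → ℝ := fun n => a n - L with hb_def
  set M' : ℝ := M + |L| with hM'_def
  have hM'0 : 0 < M' := by positivity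
  have hbM : ∀ n, |b n| ≤ M' := by
    intro n
    calc |a n - L| ≤ |a n| + |L| := abs_sub _ _
      _ ≤ M + |L| := by linarith [hM n]
  set e : ℕ → ℝ := fun n => α + (W n - 1) * L + r n with he_def
  have he0 : Tendsto e atTop (𝓝 0) := by
    have h1 : Tendsto e atTop (𝓝 (α + (c - 1) * L + 0)) :=
      (tendsto_const_nhds.add ((hWtd.sub_const 1).mul_const L)).add hr
    have h2 : α + (c - 1) * L + 0 = 0 := by rw [hLfix]; ring
    rwa [h2] at h1
  have hbrec : ∀ n, k ≤ n → b n = (2 / ((n : ℝ) - k + 1)) *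
      ∑ j ∈ Finset.range (n - k + 1), ((j : ℝ) / (n : ℝ)) ^ β * b j + e n := by
    intro n hn
    have hsplit : ∑ j ∈ Finset.range (n - k + 1), ((j : ℝ) / (n : ℝ)) ^ β * (a j - L)
        = (∑ j ∈ Finset.range (n - k + 1), ((j : ℝ) / (n : ℝ)) ^ β * a j)
          - (∑ j ∈ Finset.range (n - k + 1), ((j : ℝ) / (n : ℝ)) ^ β) * L := by
      rw [Finset.sum_mul, ← Finset.sum_sub_distrib]
      exact Finset.sum_congr rfl fun j _ => by ring
    show a n - L = _
    simp only [hb_def]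
    rw [hsplit, he_def, hW_def, mul_sub, h n hn]
    ring
  -- limsup argument
  have hbd1 : IsBoundedUnder (· ≤ ·) atTop (fun n => |b n|) :=
    isBoundedUnder_of ⟨M', fun n => hbM n⟩
  have hbd2 : IsBoundedUnder (· ≥ ·) atTop (fun n => |b n|) :=
    isBoundedUnder_of ⟨0, fun n => abs_nonneg _⟩
  have hcob : IsCoboundedUnder (· ≤ ·) atTop (fun n => |b n|) :=
    hbd2.isCoboundedUnder_le
  set S : ℝ := limsup (fun n => |b n|) atTop with hS_def
  have hS0 : 0 ≤ S :=
    le_limsup_of_frequently_le (Frequently.of_forall fun n => abs_nonneg _) hbd1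
  have key : ∀ ε : ℝ, 0 < ε → S ≤ c * S + (c + 2) * ε := by
    intro ε hε
    have h1 : ∀ᶠ n in atTop, |b n| < S + ε :=
      eventually_lt_of_limsup_lt (by linarith) hbd1
    obtain ⟨N₁, hN₁⟩ := eventually_atTop.mp h1
    have h2 : ∀ᶠ n in atTop, |e n| < ε := by
      have := Metric.tendsto_nhds.mp he0 ε hε
      simpa [Real.dist_eq] using this
    have h3 : ∀ᶠ n : ℕ in atTop, 2 * N₁ * M' / ((n : ℝ) - k + 1) ≤ ε := by
      have hd : Tendsto (fun n : ℕ => (n : ℝ) + (1 - (k : ℝ))) atTop atTop :=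
        tendsto_atTop_add_const_right _ _ tendsto_natCast_atTop_atTop
      have h4 : Tendsto (fun n : ℕ => 2 * N₁ * M' / ((n : ℝ) - k + 1)) atTop (𝓝 0) := by
        have := hd.inv_tendsto_atTop.const_mul (2 * N₁ * M' : ℝ)
        rw [mul_zero] at this
        refine this.congr fun n => ?_
        simp only [Pi.inv_apply]
        rw [div_eq_mul_inv, show (n:ℝ) + (1 - (k:ℝ)) = (n:ℝ) - k + 1 from by ring]
      exact h4.eventually (eventually_le_nhds hε)
    have hev : ∀ᶠ n in atTop, |b n| ≤ c * (S + ε) + 2 * ε := by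
      filter_upwards [h2, h3, eventually_ge_atTop (N₁ + k)] with n he3 hinit hn
      have hnk : k ≤ n := by omega
      have hN₁m : N₁ ≤ n - k := by omega
      have hd := hden n hnk
      have hSε : (0:ℝ) ≤ S + ε := by linarith
      rw [hbrec n hnk]
      refine (abs_add_le _ _).trans ?_
      have hsplitsum : ∑ j ∈ Finset.range (n - k + 1), ((j : ℝ) / (n : ℝ)) ^ β * b j
          = (∑ j ∈ Finset.Ico 0 N₁, ((j : ℝ) / (n : ℝ)) ^ β * b j)
            + ∑ j ∈ Finset.Ico N₁ (n - k + 1), ((j : ℝ) / (n : ℝ)) ^ β * b j := by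
        rw [Finset.range_eq_Ico]
        exact (Finset.sum_Ico_consecutive _ (Nat.zero_le N₁) (by omega)).symm
      have hb1 : |∑ j ∈ Finset.Ico 0 N₁, ((j : ℝ) / (n : ℝ)) ^ β * b j| ≤ N₁ * M' := by
        refine (Finset.abs_sum_le_sum_abs _ _).trans ?_
        calc ∑ j ∈ Finset.Ico 0 N₁, |((j : ℝ) / (n : ℝ)) ^ β * b j|
            ≤ ∑ _j ∈ Finset.Ico 0 N₁, M' := by
              refine Finset.sum_le_sum fun j hj => ?_
              rw [abs_mul, abs_of_nonneg (hwnn n j)]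
              have hj' : j ≤ n - k := by
                have := (Finset.mem_Ico.mp hj).2; omega
              calc ((j : ℝ) / (n : ℝ)) ^ β * |b j| ≤ 1 * M' :=
                    mul_le_mul (hwle1 n j hnk hj') (hbM j) (abs_nonneg _) one_pos.le
                _ = M' := one_mul _
          _ = N₁ * M' := by
              rw [Finset.sum_const, Nat.card_Ico, Nat.sub_zero, nsmul_eq_mul]
      have hb2 : |∑ j ∈ Finset.Ico N₁ (n - k + 1), ((j : ℝ) / (n : ℝ)) ^ β * b j|
          ≤ (∑ j ∈ Finset.range (n - k + 1), ((j : ℝ) / (n : ℝ)) ^ β) * (S + ε) := by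
        refine (Finset.abs_sum_le_sum_abs _ _).trans ?_
        calc ∑ j ∈ Finset.Ico N₁ (n - k + 1), |((j : ℝ) / (n : ℝ)) ^ β * b j|
            ≤ ∑ j ∈ Finset.Ico N₁ (n - k + 1), ((j : ℝ) / (n : ℝ)) ^ β * (S + ε) := by
              refine Finset.sum_le_sum fun j hj => ?_
              rw [abs_mul, abs_of_nonneg (hwnn n j)]
              exact mul_le_mul_of_nonneg_left
                (le_of_lt (hN₁ j (Finset.mem_Ico.mp hj).1)) (hwnn n j)
          _ ≤ ∑ j ∈ Finset.range (n - k + 1), ((j : ℝ) / (n : ℝ)) ^ β * (S + ε) := by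
              refine Finset.sum_le_sum_of_subset_of_nonneg ?_ fun j _ _ =>
                mul_nonneg (hwnn n j) hSε
              rw [Finset.range_eq_Ico]
              exact Finset.Ico_subset_Ico (Nat.zero_le _) le_rfl
          _ = (∑ j ∈ Finset.range (n - k + 1), ((j : ℝ) / (n : ℝ)) ^ β) * (S + ε) := by
              rw [Finset.sum_mul]
      have hfrac : (0:ℝ) < 2 / ((n : ℝ) - k + 1) := div_pos two_pos hd
      calc |(2 / ((n : ℝ) - k + 1)) *
              ∑ j ∈ Finset.range (n - k + 1), ((j : ℝ) / (n : ℝ)) ^ β * b j| + |e n|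
          ≤ 2 / ((n : ℝ) - k + 1) * (N₁ * M')
            + 2 / ((n : ℝ) - k + 1) *
              ((∑ j ∈ Finset.range (n - k + 1), ((j : ℝ) / (n : ℝ)) ^ β) * (S + ε))
            + |e n| := by
            rw [hsplitsum, abs_mul, abs_of_pos hfrac]
            have habs := (abs_add_le (∑ j ∈ Finset.Ico 0 N₁, ((j : ℝ) / (n : ℝ)) ^ β * b j)
              (∑ j ∈ Finset.Ico N₁ (n - k + 1), ((j : ℝ) / (n : ℝ)) ^ β * b j))
            refine add_le_add ?_ le_rfl
            rw [← mul_add]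
            exact mul_le_mul_of_nonneg_left (habs.trans (add_le_add hb1 hb2)) hfrac.le
        _ ≤ ε + c * (S + ε) + ε := by
            have e1 : 2 / ((n : ℝ) - k + 1) * (N₁ * M') = 2 * N₁ * M' / ((n : ℝ) - k + 1) := by
              ring
            have e2 : 2 / ((n : ℝ) - k + 1) *
                ((∑ j ∈ Finset.range (n - k + 1), ((j : ℝ) / (n : ℝ)) ^ β) * (S + ε))
                = W n * (S + ε) := by rw [hW_def]; ring
            have e3 : W n * (S + ε) ≤ c * (S + ε) :=
              mul_le_mul_of_nonneg_right (hWle n hnk) hSε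
            rw [e1, e2]
            have := le_of_lt he3
            linarith
        _ = c * (S + ε) + 2 * ε := by ring
    have := limsup_le_of_le hcob hev
    rw [← hS_def] at this
    linarith [this]
  have hS_le : S ≤ 0 := by
    have h1 : (1 - c) * S ≤ 0 := by
      refine le_of_forall_pos_le_add fun ε hε => ?_
      have hc2 : (0:ℝ) < c + 2 := by linarith
      have hkey := key (ε / (c + 2)) (by positivity)
      have he : (c + 2) * (ε / (c + 2)) = ε := by field_simp
      nlinarith [hkey]
    nlinarith [h1]
  have hb0 : Tendsto b atTop (𝓝 0) := by
    refine Metric.tendsto_atTop.mpr fun ε hε => ?_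
    have hlt : limsup (fun n => |b n|) atTop < ε := by
      rw [← hS_def]; exact lt_of_le_of_lt hS_le hε
    obtain ⟨N, hN⟩ := eventually_atTop.mp (eventually_lt_of_limsup_lt hlt hbd1)
    exact ⟨N, fun n hn => by simpa [Real.dist_eq] using hN n hn⟩
  have hfin : Tendsto (fun n => b n + L) atTop (𝓝 (0 + L)) := hb0.add_const L
  rw [zero_add] at hfin
  refine hfin.congr fun n => ?_
  simp [hb_def]
end

section
/- Let (a_n)_{n≥0} be a sequence of real numbers, let k be a positive integer, α ∈ ℝ and β > 1, and suppose there is a sequence (r_n) with r_n → 0 such that a_n = α + (2/(n−k+1))·Σ_{j=0}^{n−k} (j/n)^β·a_j + r_n for all n ≥ k. Then sup_{n≥0} |a_n| < ∞. -/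
open Filter Finset
open scoped Topology

private lemma bern_aux {β : ℝ} (hβ : 1 ≤ β) {x : ℝ} (hx : 1 ≤ x) :
    x ^ (β + 1) + (β + 1) * x ^ β ≤ (x + 1) ^ (β + 1) := by
  have hx0 : 0 < x := lt_of_lt_of_le one_pos hx
  have h1 : 1 + (β + 1) * (1 / x) ≤ (1 + 1 / x) ^ (β + 1) :=
    one_add_mul_self_le_rpow_one_add (le_trans (by norm_num) (one_div_nonneg.mpr hx0.le)) (by linarith)
  have h2 : x ^ (β + 1) * (1 + (β + 1) * (1 / x)) ≤ x ^ (β + 1) * (1 + 1 / x) ^ (β + 1) := by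
    apply mul_le_mul_of_nonneg_left h1 (Real.rpow_nonneg hx0.le _)
  have h3 : x ^ (β + 1) * (1 + 1 / x) ^ (β + 1) = (x + 1) ^ (β + 1) := by
    rw [← Real.mul_rpow hx0.le (by positivity)]
    congr 1
    field_simp
  have h4 : x ^ (β + 1) = x ^ β * x := Real.rpow_add_one hx0.ne' β
  rw [h3] at h2
  calc x ^ (β + 1) + (β + 1) * x ^ β
      = x ^ (β + 1) * (1 + (β + 1) * (1 / x)) := by rw [h4]; field_simp
    _ ≤ (x + 1) ^ (β + 1) := h2

private lemma sum_rpow_le {β : ℝ} (hβ : 1 ≤ β) (m : ℕ) :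
    ∑ j ∈ Finset.range (m + 1), (j : ℝ) ^ β ≤ ((m : ℝ) + 1) ^ (β + 1) / (β + 1) := by
  induction m with
  | zero =>
      rw [Finset.sum_range_one, Nat.cast_zero, Real.zero_rpow (by linarith)]
      exact div_nonneg (Real.rpow_nonneg (by norm_num) _) (by linarith)
  | succ m ih =>
      rw [Finset.sum_range_succ]
      have hx : (1 : ℝ) ≤ (m : ℝ) + 1 := le_add_of_nonneg_left (Nat.cast_nonneg m)
      have hb := bern_aux hβ hx
      have : ((m : ℝ) + 1) ^ (β + 1) / (β + 1) + ((m : ℝ) + 1) ^ β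
          ≤ ((m : ℝ) + 1 + 1) ^ (β + 1) / (β + 1) := by
        rw [div_add' _ _ _ (by linarith), div_le_div_iff₀ (by linarith) (by linarith)]
        nlinarith [hb]
      push_cast
      calc (∑ j ∈ Finset.range (m + 1), (j : ℝ) ^ β) + ((m : ℝ) + 1) ^ β
          ≤ ((m : ℝ) + 1) ^ (β + 1) / (β + 1) + ((m : ℝ) + 1) ^ β := by linarith
        _ ≤ ((m : ℝ) + 1 + 1) ^ (β + 1) / (β + 1) := this

/-- If `a_n = α + (2/(n-k+1)) Σ_{j=0}^{n-k} (j/n)^β a_j + o(1)` with `β > 1`,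
then `sup_n |a_n| < ∞`. -/
theorem seq_abs_bounded_of_recursion
    (a : ℕ → ℝ) (k : ℕ) (hk : 0 < k) (α β : ℝ) (hβ : 1 < β)
    (r : ℕ → ℝ) (hr : Tendsto r atTop (𝓝 0))
    (h : ∀ n : ℕ, k ≤ n →
      a n = α + (2 / ((n : ℝ) - (k : ℝ) + 1)) *
        ∑ j ∈ Finset.range (n - k + 1), ((j : ℝ) / (n : ℝ)) ^ β * a j + r n) :
    ∃ C : ℝ, ∀ n, |a n| ≤ C := by
  -- bound on r
  obtain ⟨R, hR⟩ : ∃ R : ℝ, ∀ n, |r n| ≤ R := by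
    have : Tendsto (fun n => |r n|) atTop (𝓝 |0|) := hr.abs
    obtain ⟨R, hR⟩ := this.bddAbove_range
    exact ⟨R, fun n => hR ⟨n, rfl⟩⟩
  have hR0 : 0 ≤ R := le_trans (abs_nonneg _) (hR 0)
  set ρ : ℝ := 2 / (β + 1) with hρdef
  have hρ0 : 0 < ρ := by positivity
  have hρ1 : ρ < 1 := by
    rw [hρdef, div_lt_one (by linarith)]; linarith
  set C0 : ℝ := (Finset.range k).sup' (Finset.nonempty_range_iff.mpr hk.ne') (fun j => |a j|) with hC0
  have hC0nn : 0 ≤ C0 := le_trans (abs_nonneg (a 0)) (Finset.le_sup' (fun j => |a j|) (Finset.mem_range.mpr hk))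
  set C : ℝ := max C0 ((|α| + R) / (1 - ρ)) with hC
  have hCnn : 0 ≤ C := le_trans hC0nn (le_max_left _ _)
  refine ⟨C, fun n => ?_⟩
  induction n using Nat.strong_induction_on with
  | _ n ih =>
    by_cases hn : n < k
    · exact le_trans (Finset.le_sup' (fun j => |a j|) (Finset.mem_range.mpr hn))
        (le_max_left _ _)
    · push_neg at hn
      have hn0 : (0 : ℝ) < n := by
        exact_mod_cast lt_of_lt_of_le hk hn
      set m : ℕ := n - k with hm
      have hmn : ((n : ℝ) - (k : ℝ) + 1) = (m : ℝ) + 1 := by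
        rw [hm]; push_cast [Nat.cast_sub hn]; ring
      have hm1n : (m : ℝ) + 1 ≤ (n : ℝ) := by
        have : m + 1 ≤ n := by omega
        exact_mod_cast this
      -- key sum bound
      have hsum : ∑ j ∈ Finset.range (m + 1), ((j : ℝ) / (n : ℝ)) ^ β ≤ ρ / 2 * ((m : ℝ) + 1) := by
        have h1 : ∀ j ∈ Finset.range (m + 1), ((j : ℝ) / (n : ℝ)) ^ β
            = (j : ℝ) ^ β / (n : ℝ) ^ β := by
          intro j _
          rw [Real.div_rpow (by positivity) hn0.le]
        rw [Finset.sum_congr rfl h1, ← Finset.sum_div]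
        rw [div_le_iff₀ (by positivity)]
        calc ∑ j ∈ Finset.range (m + 1), (j : ℝ) ^ β
            ≤ ((m : ℝ) + 1) ^ (β + 1) / (β + 1) := sum_rpow_le hβ.le m
          _ ≤ ρ / 2 * ((m : ℝ) + 1) * (n : ℝ) ^ β := by
              rw [hρdef]
              have h2 : ((m : ℝ) + 1) ^ (β + 1) = ((m : ℝ) + 1) ^ β * ((m : ℝ) + 1) :=
                Real.rpow_add_one (by positivity) β
              have h3 : ((m : ℝ) + 1) ^ β ≤ (n : ℝ) ^ β :=
                Real.rpow_le_rpow (by positivity) hm1n (by linarith)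
              rw [h2, div_le_iff₀ (by linarith)]
              calc ((m : ℝ) + 1) ^ β * ((m : ℝ) + 1)
                  ≤ (n : ℝ) ^ β * ((m : ℝ) + 1) := by
                    apply mul_le_mul_of_nonneg_right h3 (by positivity)
                _ = 2 / (β + 1) / 2 * ((m : ℝ) + 1) * (n : ℝ) ^ β * (β + 1) := by
                    field_simp
      -- bound the recursive term
      have hterm : |(2 / ((n : ℝ) - (k : ℝ) + 1)) *
          ∑ j ∈ Finset.range (n - k + 1), ((j : ℝ) / (n : ℝ)) ^ β * a j| ≤ ρ * C := by
        rw [abs_mul]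
        have hpos : (0 : ℝ) < (m : ℝ) + 1 := by positivity
        have hcoef : |2 / ((n : ℝ) - (k : ℝ) + 1)| = 2 / ((m : ℝ) + 1) := by
          rw [hmn, abs_of_pos (by positivity)]
        rw [hcoef]
        have habs : |∑ j ∈ Finset.range (n - k + 1), ((j : ℝ) / (n : ℝ)) ^ β * a j|
            ≤ C * (ρ / 2 * ((m : ℝ) + 1)) := by
          calc |∑ j ∈ Finset.range (n - k + 1), ((j : ℝ) / (n : ℝ)) ^ β * a j|
              ≤ ∑ j ∈ Finset.range (n - k + 1), |((j : ℝ) / (n : ℝ)) ^ β * a j| :=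
                Finset.abs_sum_le_sum_abs _ _
            _ ≤ ∑ j ∈ Finset.range (m + 1), ((j : ℝ) / (n : ℝ)) ^ β * C := by
                apply Finset.sum_le_sum
                intro j hj
                rw [abs_mul, abs_of_nonneg (Real.rpow_nonneg (by positivity) β)]
                apply mul_le_mul_of_nonneg_left _ (Real.rpow_nonneg (by positivity) β)
                apply ih
                have hj' : j < m + 1 := Finset.mem_range.mp hj
                omega
            _ = (∑ j ∈ Finset.range (m + 1), ((j : ℝ) / (n : ℝ)) ^ β) * C := by
                rw [Finset.sum_mul]
            _ ≤ C * (ρ / 2 * ((m : ℝ) + 1)) := by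
                rw [mul_comm]
                exact mul_le_mul_of_nonneg_left hsum hCnn
        calc 2 / ((m : ℝ) + 1) * |∑ j ∈ Finset.range (n - k + 1), ((j : ℝ) / (n : ℝ)) ^ β * a j|
            ≤ 2 / ((m : ℝ) + 1) * (C * (ρ / 2 * ((m : ℝ) + 1))) := by
              apply mul_le_mul_of_nonneg_left habs (by positivity)
          _ = ρ * C := by field_simp
      -- put it together
      have := h n hn
      have hbound : |a n| ≤ |α| + ρ * C + R := by
        rw [this]
        calc |α + (2 / ((n : ℝ) - (k : ℝ) + 1)) *
              (∑ j ∈ Finset.range (n - k + 1), ((j : ℝ) / (n : ℝ)) ^ β * a j) + r n|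
            ≤ |α + (2 / ((n : ℝ) - (k : ℝ) + 1)) *
              (∑ j ∈ Finset.range (n - k + 1), ((j : ℝ) / (n : ℝ)) ^ β * a j)| + |r n| :=
              abs_add_le _ _
          _ ≤ |α| + ρ * C + R := by
              have := abs_add_le α ((2 / ((n : ℝ) - (k : ℝ) + 1)) *
                ∑ j ∈ Finset.range (n - k + 1), ((j : ℝ) / (n : ℝ)) ^ β * a j)
              have := hR n
              linarith [hterm]
      have hCge : (|α| + R) / (1 - ρ) ≤ C := le_max_right _ _
      have : |α| + R ≤ (1 - ρ) * C := by
        rw [div_le_iff₀ (by linarith)] at hCge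
        linarith
      linarith
end

section
/- Let σ ≥ 0 and let (μ_m)_{m≥1} be a sequence of real numbers such that μ_1 = 0, μ_2 = σ², and for every integer m ≥ 3, μ_m = ((m+2)/(m−2))·Σ_{i=1}^{m−1} C(m,i)·(∫₀¹ x^{i/2}·(1−x)^{(m−i)/2} dx)·μ_i·μ_{m−i}, where C(m,i) is the binomial coefficient. Then μ_m = 0 for every odd m, and μ_m = m!·σ^m/(2^{m/2}·(m/2)!) for every even m; that is, the μ_m are the moments of the centered normal distribution with variance σ². -/
open Filter Finset
open scoped Topology

lemma beta_nat (a b : ℕ) :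
    (∫ x in (0:ℝ)..1, x ^ (a:ℝ) * (1 - x) ^ (b:ℝ)) =
      (a.factorial * b.factorial : ℝ) / ((a+b+1).factorial) := by
  have h1 : (∫ x in (0:ℝ)..1, x ^ (a:ℝ) * (1 - x) ^ (b:ℝ)) =
      ∫ x in (0:ℝ)..1, x ^ a * (1 - x) ^ b := by
    simp_rw [Real.rpow_natCast]
  have hB : Complex.betaIntegral ((a:ℂ)+1) ((b:ℂ)+1) =
      ((∫ x in (0:ℝ)..1, x ^ a * (1 - x) ^ b : ℝ) : ℂ) := by
    rw [Complex.betaIntegral, ← intervalIntegral.integral_ofReal]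
    refine intervalIntegral.integral_congr fun x hx => ?_
    simp only [add_sub_cancel_right, Complex.cpow_natCast]
    push_cast
    ring
  have hG := Complex.Gamma_mul_Gamma_eq_betaIntegral
    (s := (a:ℂ)+1) (t := (b:ℂ)+1) (by simp; positivity) (by simp; positivity)
  rw [hB] at hG
  have ha : Complex.Gamma ((a:ℂ)+1) = (a.factorial : ℂ) := Complex.Gamma_nat_eq_factorial a
  have hb : Complex.Gamma ((b:ℂ)+1) = (b.factorial : ℂ) := Complex.Gamma_nat_eq_factorial b
  have hab : Complex.Gamma ((a:ℂ)+1+((b:ℂ)+1)) = ((a+b+1).factorial : ℂ) := by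
    have := Complex.Gamma_nat_eq_factorial (a+b+1)
    rw [← this]; push_cast; ring_nf
  rw [ha, hb, hab] at hG
  have hfac : ((a+b+1).factorial : ℂ) ≠ 0 := by exact_mod_cast Nat.factorial_ne_zero _
  have h2 : ((∫ x in (0:ℝ)..1, x ^ a * (1 - x) ^ b : ℝ) : ℂ) =
      (a.factorial * b.factorial : ℂ) / ((a+b+1).factorial : ℂ) := by
    rw [eq_div_iff hfac]; linear_combination -hG
  rw [h1]
  exact Complex.ofReal_injective (by push_cast at h2 ⊢; linear_combination h2)

lemma even_filter_Ico (n : ℕ) :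
    (Finset.Ico 1 (n+n)).filter (fun i => Even i) =
      (Finset.Ico 1 n).image (fun j => j + j) := by
  ext a
  simp only [Finset.mem_filter, Finset.mem_Ico, Finset.mem_image, Nat.even_iff]
  constructor
  · rintro ⟨⟨ha1, ha2⟩, ha3⟩
    exact ⟨a / 2, by omega, by omega⟩
  · rintro ⟨j, ⟨hj1, hj2⟩, rfl⟩
    omega

/-- The moment recursion (2.14) with `μ₁ = 0`, `μ₂ = σ²` has as unique
solution the moments of the centered normal distribution with variance `σ²`. -/
theorem moments_of_recursion_are_gaussian_moments
    (σ : ℝ) (hσ : 0 ≤ σ) (μ : ℕ → ℝ)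
    (h1 : μ 1 = 0) (h2 : μ 2 = σ ^ 2)
    (hrec : ∀ m : ℕ, 3 ≤ m →
      μ m = (((m : ℝ) + 2) / ((m : ℝ) - 2)) *
        ∑ i ∈ Finset.Ico 1 m, (m.choose i : ℝ) *
          (∫ x in (0:ℝ)..1, x ^ ((i : ℝ) / 2) * (1 - x) ^ (((m - i : ℕ) : ℝ) / 2)) *
          μ i * μ (m - i)) :
    ∀ m : ℕ, 1 ≤ m →
      (Odd m → μ m = 0) ∧
      (Even m → μ m = (m.factorial : ℝ) * σ ^ m / (2 ^ (m / 2) * ((m / 2).factorial : ℝ))) := by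
  intro m
  induction m using Nat.strong_induction_on with
  | _ m IH =>
  intro hm
  rcases eq_or_lt_of_le hm with h1' | h1'
  · -- m = 1
    subst h1'
    exact ⟨fun _ => h1, fun hev => by rw [Nat.even_iff] at hev; omega⟩
  rcases eq_or_lt_of_le (show 2 ≤ m by omega) with h2' | h2'
  · -- m = 2
    subst h2'
    refine ⟨fun hodd => by rw [Nat.odd_iff] at hodd; omega, fun _ => ?_⟩
    rw [h2]; norm_num [Nat.factorial]
  have h3 : 3 ≤ m := by omega
  rcases Nat.even_or_odd m with hpar | hpar
  · -- m even
    refine ⟨fun hodd => by rw [Nat.odd_iff] at hodd; rw [Nat.even_iff] at hpar; omega, fun _ => ?_⟩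
    obtain ⟨n, hn⟩ := hpar
    have hn2 : 2 ≤ n := by omega
    set K : ℝ := (m.factorial : ℝ) * σ ^ m / (((n+1).factorial : ℝ) * 2 ^ n) with hK
    have hterm : ∀ i ∈ Finset.Ico 1 m,
        (m.choose i : ℝ) *
          (∫ x in (0:ℝ)..1, x ^ ((i : ℝ) / 2) * (1 - x) ^ (((m - i : ℕ) : ℝ) / 2)) *
          μ i * μ (m - i) = if Even i then K else 0 := by
      intro i hi
      rw [Finset.mem_Ico] at hi
      by_cases hie : Even i
      · rw [if_pos hie]
        obtain ⟨j, hj⟩ := hie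
        have hj1 : 1 ≤ j := by omega
        have hjn : j < n := by omega
        set k : ℕ := n - j with hk
        have hmi : m - i = k + k := by omega
        have hjk : j + k = n := by omega
        -- integral
        have he1 : (i : ℝ) / 2 = ((j : ℕ) : ℝ) := by
          rw [hj]; push_cast; ring
        have he2 : ((m - i : ℕ) : ℝ) / 2 = ((k : ℕ) : ℝ) := by
          rw [hmi]; push_cast; ring
        rw [he1, he2, beta_nat j k]
        -- moments of i and m - i
        have hμi : μ i = (i.factorial : ℝ) * σ ^ i / (2 ^ j * (j.factorial : ℝ)) := by
          have := (IH i hi.2 hi.1).2 ⟨j, hj⟩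
          rwa [show i / 2 = j by omega] at this
        have hμmi : μ (m - i) = ((m-i).factorial : ℝ) * σ ^ (m-i) / (2 ^ k * (k.factorial : ℝ)) := by
          have h1le : 1 ≤ m - i := by omega
          have hlt : m - i < m := by omega
          have := (IH (m-i) hlt h1le).2 ⟨k, hmi⟩
          rwa [show (m - i) / 2 = k by omega] at this
        have hchoose : (m.choose i : ℝ) = (m.factorial : ℝ) / ((i.factorial : ℝ) * ((m-i).factorial : ℝ)) :=
          Nat.cast_choose ℝ (le_of_lt hi.2)
        rw [hμi, hμmi, hchoose, hK]
        have hsig : σ ^ i * σ ^ (m - i) = σ ^ m := by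
          rw [← pow_add]; congr 1; omega
        have h2n : (2:ℝ) ^ j * 2 ^ k = 2 ^ n := by
          rw [← pow_add, hjk]
        have hfi : (i.factorial : ℝ) ≠ 0 := by exact_mod_cast Nat.factorial_ne_zero _
        have hfmi : ((m-i).factorial : ℝ) ≠ 0 := by exact_mod_cast Nat.factorial_ne_zero _
        have hfj : (j.factorial : ℝ) ≠ 0 := by exact_mod_cast Nat.factorial_ne_zero _
        have hfk : (k.factorial : ℝ) ≠ 0 := by exact_mod_cast Nat.factorial_ne_zero _
        have hfn1 : ((j+k+1).factorial : ℝ) ≠ 0 := by exact_mod_cast Nat.factorial_ne_zero _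
        rw [show n + 1 = j + k + 1 by omega]
        field_simp
        rw [show (2:ℝ) ^ n = 2 ^ j * 2 ^ k from h2n.symm, ← hsig]
        ring
      · rw [if_neg hie]
        have hio : Odd i := Nat.not_even_iff_odd.mp hie
        have : μ i = 0 := (IH i hi.2 hi.1).1 hio
        rw [this]; ring
    have hfilter : (Finset.Ico 1 m).filter (fun i => Even i) =
        (Finset.Ico 1 n).image (fun j => j + j) := by rw [hn]; exact even_filter_Ico n
    rw [hrec m h3, Finset.sum_congr rfl hterm, ← Finset.sum_filter,
      Finset.sum_const, hfilter,
      Finset.card_image_of_injective _ (fun a b hab => by omega), Nat.card_Ico]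
    have hm2 : m / 2 = n := by omega
    rw [hm2]
    have h1n : 1 ≤ n := by omega
    have hcast : ((n - 1 : ℕ) : ℝ) = (n : ℝ) - 1 := by push_cast [h1n]; ring
    have hmr : (m : ℝ) = (n : ℝ) + (n : ℝ) := by rw [hn]; push_cast; ring
    have hfn : ((n).factorial : ℝ) ≠ 0 := by exact_mod_cast Nat.factorial_ne_zero _
    have hfn1 : (((n+1)).factorial : ℝ) ≠ 0 := by exact_mod_cast Nat.factorial_ne_zero _
    have hfs : (((n+1)).factorial : ℝ) = ((n:ℝ) + 1) * (n.factorial : ℝ) := by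
      rw [Nat.factorial_succ]; push_cast; ring
    have h2n : (2:ℝ)^n ≠ 0 := by positivity
    rw [nsmul_eq_mul, hcast, hmr]
    have hden : (n:ℝ) + (n:ℝ) - 2 ≠ 0 := by
      have : (2:ℝ) ≤ (n:ℝ) := by exact_mod_cast hn2
      nlinarith
    have key : ((n:ℝ) + (n:ℝ) + 2)/((n:ℝ) + (n:ℝ) - 2) * (((n:ℝ)-1) * K) = ((n:ℝ)+1)*K := by
      rw [div_mul_eq_mul_div, div_eq_iff hden]
      ring
    rw [key, hK, hfs]
    have hn1 : (n:ℝ) + 1 ≠ 0 := by positivity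
    field_simp
  · -- m odd
    refine ⟨fun _ => ?_, fun hev => by rw [Nat.odd_iff] at hpar; rw [Nat.even_iff] at hev; omega⟩
    rw [hrec m h3]
    have : ∀ i ∈ Finset.Ico 1 m,
        (m.choose i : ℝ) *
          (∫ x in (0:ℝ)..1, x ^ ((i : ℝ) / 2) * (1 - x) ^ (((m - i : ℕ) : ℝ) / 2)) *
          μ i * μ (m - i) = 0 := by
      intro i hi
      rw [Finset.mem_Ico] at hi
      rcases Nat.even_or_odd i with hie | hio
      · have hmo : Odd (m - i) := Nat.Odd.sub_even (le_of_lt hi.2) hpar hie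
        have h1le : 1 ≤ m - i := by omega
        have hlt : m - i < m := by omega
        rw [(IH (m-i) hlt h1le).1 hmo, mul_zero]
      · rw [(IH i hi.2 hi.1).1 hio, mul_zero, zero_mul]
    rw [Finset.sum_congr rfl this, Finset.sum_const_zero, mul_zero]
end

section
/- Let d ≥ 1 and let μ be a Borel probability measure on ℝ^d whose characteristic function ψ(t) = ∫ exp(i·t·x) dμ(x) satisfies ψ(t) = ∫₀¹ ψ(√u·t)·ψ(√(1−u)·t) du for every t ∈ ℝ^d. Fix a ∈ ℝ^d and define the Laplace transform χ_a(s) = ∫₀^∞ exp(−s·w)·ψ(√w·a) dw for s > 0. Then χ_a is differentiable on (0,∞) and satisfies the Riccati equation χ_a′(s) = −χ_a(s)² for all s > 0. -/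
open MeasureTheory Filter
open scoped Topology RealInnerProductSpace

noncomputable section

/-! ### Auxiliary lemmas -/

lemma aux_bound_int {c : ℝ} (hc : 0 < c) :
    IntegrableOn (fun w : ℝ => w * Real.exp (-c * w)) (Set.Ioi 0) := by
  have h := integrableOn_rpow_mul_exp_neg_mul_rpow (p := 1) (s := 1) (b := c)
    (by norm_num) zero_lt_one hc
  refine h.congr_fun (fun x hx => ?_) measurableSet_Ioi
  simp [Real.rpow_one]

lemma aux_exp_norm (x w : ℝ) : ‖Complex.exp (-(x:ℂ) * w)‖ = Real.exp (-(x * w)) := by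
  rw [Complex.norm_exp]
  norm_num

lemma aux_exp_int {s : ℝ} (hs : 0 < s) (v : ℝ) :
    ∫ w in Set.Ioi v, Real.exp (-(s * w)) = s⁻¹ * Real.exp (-(s * v)) := by
  have h := integral_comp_mul_left_Ioi (fun x => Real.exp (-x)) v hs
  simp only [smul_eq_mul] at h
  rw [integral_exp_neg_Ioi] at h
  exact h

/-- Differentiability of the Laplace transform of a bounded continuous function. -/
lemma hasDeriv_laplace (f : ℝ → ℂ) (hf : Continuous f) (hb : ∀ w, ‖f w‖ ≤ 1) {s : ℝ}
    (hs : 0 < s) :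
    HasDerivAt (fun x : ℝ => ∫ w in Set.Ioi (0:ℝ), Complex.exp (-(x:ℂ) * w) * f w)
      (∫ w in Set.Ioi (0:ℝ), -(w:ℂ) * Complex.exp (-(s:ℂ) * w) * f w) s := by
  have meas : ∀ x : ℝ, AEStronglyMeasurable (fun w : ℝ => Complex.exp (-(x:ℂ) * w) * f w)
      (volume.restrict (Set.Ioi 0)) := fun x =>
    ((Complex.continuous_exp.comp (by continuity)).mul hf).aestronglyMeasurable
  have key := hasDerivAt_integral_of_dominated_loc_of_deriv_le
    (μ := volume.restrict (Set.Ioi (0:ℝ)))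
    (F := fun (x : ℝ) (w : ℝ) => Complex.exp (-(x:ℂ) * w) * f w)
    (F' := fun (x : ℝ) (w : ℝ) => -(w:ℂ) * Complex.exp (-(x:ℂ) * w) * f w)
    (x₀ := s) (s := Metric.ball s (s / 2))
    (bound := fun w : ℝ => w * Real.exp (-(s/2) * w))
    (Metric.ball_mem_nhds s (half_pos hs))
    (Eventually.of_forall meas)
    ?hFint
    ?hF'meas
    ?hbound
    (aux_bound_int (half_pos hs))
    ?hdiff
  · exact key.2
  case hFint =>
    refine Integrable.mono' (exp_neg_integrableOn_Ioi 0 hs) (meas s) ?_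
    filter_upwards with w
    rw [norm_mul, aux_exp_norm]
    calc Real.exp (-(s*w)) * ‖f w‖ ≤ Real.exp (-(s*w)) * 1 :=
          mul_le_mul_of_nonneg_left (hb w) (Real.exp_nonneg _)
      _ = Real.exp (-s * w) := by ring_nf
  case hF'meas =>
    exact ((Complex.continuous_ofReal.neg.mul
      (Complex.continuous_exp.comp (by continuity))).mul hf).aestronglyMeasurable
  case hbound =>
    rw [ae_restrict_iff' measurableSet_Ioi]
    filter_upwards with w hw
    intro x hx
    have hx2 : s / 2 ≤ x := by
      have := abs_lt.1 (by simpa [Real.dist_eq] using Metric.mem_ball.1 hx)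
      linarith
    rw [norm_mul, norm_mul, norm_neg, Complex.norm_real, aux_exp_norm,
      Real.norm_eq_abs, abs_of_pos hw]
    have h2 : Real.exp (-(x * w)) ≤ Real.exp (-(s/2) * w) := by
      apply Real.exp_le_exp.2
      have : (0:ℝ) < w := hw
      nlinarith
    calc w * Real.exp (-(x * w)) * ‖f w‖ ≤ w * Real.exp (-(x * w)) * 1 := by
          have hw' : (0:ℝ) < w := hw
          apply mul_le_mul_of_nonneg_left (hb w)
          positivity
      _ = w * Real.exp (-(x * w)) := by ring
      _ ≤ w * Real.exp (-(s/2) * w) := by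
          exact mul_le_mul_of_nonneg_left h2 (le_of_lt hw)
  case hdiff =>
    rw [ae_restrict_iff' measurableSet_Ioi]
    filter_upwards with w hw
    intro x hx
    have h1 : HasDerivAt (fun z : ℂ => Complex.exp (-z * w) * f w)
        (-(w:ℂ) * Complex.exp (-(x:ℂ) * w) * f w) (x : ℂ) := by
      have h2 : HasDerivAt (fun z : ℂ => -z * w) (-(w:ℂ)) (x:ℂ) := by
        simpa using ((hasDerivAt_id (x:ℂ)).neg.mul_const (w:ℂ))
      have := (h2.cexp).mul_const (f w)
      rw [show -(w:ℂ) * Complex.exp (-(x:ℂ) * w) * f w = Complex.exp (-(x:ℂ) * w) * -(w:ℂ) * f w by ring]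
      exact this
    exact h1.comp_ofReal

/-- The characteristic function is bounded by one. -/
lemma psi_bound {d : ℕ} (μ : Measure (EuclideanSpace ℝ (Fin d))) [IsProbabilityMeasure μ]
    (ψ : EuclideanSpace ℝ (Fin d) → ℂ)
    (hψ : ∀ t, ψ t = ∫ x, Complex.exp ((⟪t, x⟫ : ℝ) * Complex.I) ∂ μ) :
    ∀ t, ‖ψ t‖ ≤ 1 := by
  intro t
  rw [hψ t]
  calc ‖∫ x, Complex.exp ((⟪t, x⟫ : ℝ) * Complex.I) ∂ μ‖
      ≤ ∫ x, ‖Complex.exp ((⟪t, x⟫ : ℝ) * Complex.I)‖ ∂ μ := norm_integral_le_integral_norm _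
    _ = ∫ (_ : EuclideanSpace ℝ (Fin d)), (1:ℝ) ∂ μ := by
        congr 1; ext x
        rw [Complex.norm_exp]
        simp
    _ = 1 := by simp

/-- The characteristic function is continuous. -/
lemma psi_cont {d : ℕ} (μ : Measure (EuclideanSpace ℝ (Fin d))) [IsProbabilityMeasure μ]
    (ψ : EuclideanSpace ℝ (Fin d) → ℂ)
    (hψ : ∀ t, ψ t = ∫ x, Complex.exp ((⟪t, x⟫ : ℝ) * Complex.I) ∂ μ) :
    Continuous ψ := by
  have : Continuous fun t : EuclideanSpace ℝ (Fin d) =>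
      ∫ x, Complex.exp ((⟪t, x⟫ : ℝ) * Complex.I) ∂ μ := by
    apply continuous_of_dominated (bound := fun _ => (1:ℝ))
    · intro t
      apply Continuous.aestronglyMeasurable
      have : Continuous fun x : EuclideanSpace ℝ (Fin d) => ((⟪t, x⟫ : ℝ) : ℂ) * Complex.I :=
        (Complex.continuous_ofReal.comp (continuous_const.inner continuous_id)).mul
          continuous_const
      exact Complex.continuous_exp.comp this
    · intro t
      filter_upwards with x
      rw [Complex.norm_exp]
      simp
    · simpa using integrable_const (E := ℝ) (μ := μ) 1
    · filter_upwards with x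
      have : Continuous fun t : EuclideanSpace ℝ (Fin d) => ((⟪t, x⟫ : ℝ) : ℂ) * Complex.I :=
        (Complex.continuous_ofReal.comp (continuous_id.inner continuous_const)).mul
          continuous_const
      exact Complex.continuous_exp.comp this
  exact this.congr fun t => (hψ t).symm

/-- The functional equation turns into a convolution identity. -/
lemma conv_id {d : ℕ} (ψ : EuclideanSpace ℝ (Fin d) → ℂ)
    (heq : ∀ t, ψ t = ∫ u in (0:ℝ)..1, ψ (Real.sqrt u • t) * ψ (Real.sqrt (1 - u) • t))
    (a : EuclideanSpace ℝ (Fin d)) {w : ℝ} (hw : 0 < w) :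
    (w:ℂ) * ψ (Real.sqrt w • a)
      = ∫ v in (0:ℝ)..w, ψ (Real.sqrt v • a) * ψ (Real.sqrt (w - v) • a) := by
  have h1 : ψ (Real.sqrt w • a)
      = ∫ u in (0:ℝ)..1, ψ (Real.sqrt (u * w) • a) * ψ (Real.sqrt (w - u * w) • a) := by
    rw [heq (Real.sqrt w • a)]
    apply intervalIntegral.integral_congr
    intro u hu
    rw [Set.uIcc_of_le (by norm_num : (0:ℝ) ≤ 1)] at hu
    obtain ⟨hu0, hu1⟩ := hu
    simp only
    rw [smul_smul, smul_smul, ← Real.sqrt_mul hu0, ← Real.sqrt_mul (by linarith : (0:ℝ) ≤ 1 - u)]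
    have : (1 - u) * w = w - u * w := by ring
    rw [this]
  have h2 := intervalIntegral.integral_comp_mul_right
    (a := (0:ℝ)) (b := 1)
    (fun v => ψ (Real.sqrt v • a) * ψ (Real.sqrt (w - v) • a)) (ne_of_gt hw)
  rw [h1, h2]
  simp only [zero_mul, one_mul, Complex.real_smul]
  rw [← mul_assoc]
  push_cast
  rw [mul_inv_cancel₀ (by exact_mod_cast ne_of_gt hw : (w:ℂ) ≠ 0), one_mul]

/-- The square of the Laplace transform is the Laplace transform of the convolution. -/
lemma laplace_sq (f : ℝ → ℂ) (hf : Continuous f) (hb : ∀ w, ‖f w‖ ≤ 1) {s : ℝ} (hs : 0 < s) :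
    (∫ w in Set.Ioi (0:ℝ), Complex.exp (-(s:ℂ) * w) * f w) ^ 2
      = ∫ w in Set.Ioi (0:ℝ), Complex.exp (-(s:ℂ) * w) * ∫ v in (0:ℝ)..w, f v * f (w - v) := by
  set E : ℝ → ℂ := fun x => Complex.exp (-(s:ℂ) * x) with hE
  set Φ : ℝ → ℝ → ℂ :=
    fun v w => Set.indicator (Set.Ioi v) (fun w => E w * f v * f (w - v)) w with hΦ
  have hEcont : Continuous E :=
    Complex.continuous_exp.comp (continuous_const.mul Complex.continuous_ofReal)
  have hEnorm : ∀ x : ℝ, ‖E x‖ = Real.exp (-(s * x)) := fun x => aux_exp_norm s x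
  have hexp_int : Integrable (fun w : ℝ => Real.exp (-(s * w))) (volume.restrict (Set.Ioi 0)) :=
    (exp_neg_integrableOn_Ioi 0 hs).congr_fun (fun x _ => by ring_nf) measurableSet_Ioi
  have hΦnorm : ∀ v w : ℝ,
      ‖Φ v w‖ ≤ Set.indicator (Set.Ioi v) (fun w => Real.exp (-(s * w))) w := by
    intro v w
    by_cases h : w ∈ Set.Ioi v
    · rw [hΦ]
      simp only [Set.indicator_of_mem h]
      rw [norm_mul, norm_mul, hEnorm]
      have h1 : Real.exp (-(s * w)) * ‖f v‖ ≤ Real.exp (-(s * w)) :=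
        mul_le_of_le_one_right (Real.exp_nonneg _) (hb v)
      have h2 : Real.exp (-(s * w)) * ‖f v‖ * ‖f (w - v)‖ ≤ Real.exp (-(s * w)) * ‖f v‖ :=
        mul_le_of_le_one_right (mul_nonneg (Real.exp_nonneg _) (norm_nonneg _)) (hb (w - v))
      exact le_trans h2 h1
    · rw [hΦ]
      simp only [Set.indicator_of_notMem h, norm_zero]
      exact le_refl 0
  have hmeasΦ : AEStronglyMeasurable (Function.uncurry Φ)
      ((volume.restrict (Set.Ioi 0)).prod (volume.restrict (Set.Ioi 0))) := by
    have huncurry : Function.uncurry Φ = Set.indicator {p : ℝ × ℝ | p.1 < p.2}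
        (fun p => E p.2 * f p.1 * f (p.2 - p.1)) := by
      ext p
      by_cases h : p.1 < p.2
      · rw [Set.indicator_of_mem (by exact h : p ∈ {p : ℝ × ℝ | p.1 < p.2})]
        simp only [Function.uncurry, hΦ]
        rw [Set.indicator_of_mem (Set.mem_Ioi.2 h)]
      · rw [Set.indicator_of_notMem (by exact h : p ∉ {p : ℝ × ℝ | p.1 < p.2})]
        simp only [Function.uncurry, hΦ]
        rw [Set.indicator_of_notMem (by simpa using h)]
    rw [huncurry]
    exact ((((hEcont.comp continuous_snd).mul (hf.comp continuous_fst)).mul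
      (hf.comp (continuous_snd.sub continuous_fst))).stronglyMeasurable.indicator
        (measurableSet_lt measurable_fst measurable_snd)).aestronglyMeasurable
  have hΦv_int : ∀ v : ℝ, Integrable (fun w => Φ v w) (volume.restrict (Set.Ioi 0)) := by
    intro v
    refine Integrable.mono' hexp_int ?_ ?_
    · exact (((hEcont.mul continuous_const).mul
        (hf.comp (continuous_id.sub continuous_const))).stronglyMeasurable.indicator
          measurableSet_Ioi).aestronglyMeasurable
    · filter_upwards with w
      refine le_trans (hΦnorm v w) ?_
      by_cases h : w ∈ Set.Ioi v
      · rw [Set.indicator_of_mem h]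
      · rw [Set.indicator_of_notMem h]
        positivity
  have hΦint : Integrable (Function.uncurry Φ)
      ((volume.restrict (Set.Ioi 0)).prod (volume.restrict (Set.Ioi 0))) := by
    refine (integrable_prod_iff hmeasΦ).2 ⟨?_, ?_⟩
    · filter_upwards with v
      exact hΦv_int v
    · refine Integrable.mono' (g := fun v : ℝ => s⁻¹ * Real.exp (-(s * v)))
        (hexp_int.const_mul s⁻¹) (hmeasΦ.norm.integral_prod_right') ?_
      rw [ae_restrict_iff' measurableSet_Ioi]
      filter_upwards with v hv
      have key : ∫ w in Set.Ioi (0:ℝ), ‖Φ v w‖ ≤ s⁻¹ * Real.exp (-(s * v)) := by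
        have h1 : ∫ w in Set.Ioi (0:ℝ), ‖Φ v w‖
            ≤ ∫ w in Set.Ioi (0:ℝ),
                Set.indicator (Set.Ioi v) (fun w => Real.exp (-(s * w))) w :=
          integral_mono (hΦv_int v).norm
            (hexp_int.indicator measurableSet_Ioi) (hΦnorm v)
        have h2 : ∫ w in Set.Ioi (0:ℝ),
            Set.indicator (Set.Ioi v) (fun w => Real.exp (-(s * w))) w
            = ∫ w in Set.Ioi v, Real.exp (-(s * w)) := by
          rw [setIntegral_indicator measurableSet_Ioi,
            Set.inter_eq_self_of_subset_right (Set.Ioi_subset_Ioi (le_of_lt hv))]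
        rw [h2] at h1
        rw [aux_exp_int hs v] at h1
        exact h1
      calc ‖∫ w in Set.Ioi (0:ℝ), ‖Φ v w‖‖
          = ∫ w in Set.Ioi (0:ℝ), ‖Φ v w‖ :=
            Real.norm_of_nonneg (integral_nonneg fun w => norm_nonneg _)
        _ ≤ s⁻¹ * Real.exp (-(s * v)) := key
  have step1 : (∫ w in Set.Ioi (0:ℝ), E w * f w) ^ 2
      = ∫ v in Set.Ioi (0:ℝ), ∫ w in Set.Ioi (0:ℝ), Φ v w := by
    rw [pow_two, ← integral_mul_const]
    apply setIntegral_congr_fun measurableSet_Ioi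
    intro v hv
    simp only
    rw [← integral_const_mul]
    have htrans : ∫ w in Set.Ioi (0:ℝ), Φ v w = ∫ u in Set.Ioi (0:ℝ), Φ v (u + v) := by
      rw [← integral_indicator measurableSet_Ioi, ← integral_indicator measurableSet_Ioi]
      have l : Set.indicator (Set.Ioi (0:ℝ)) (fun u => Φ v (u + v)) = fun u => Φ v (u + v) := by
        ext u
        by_cases h : u ∈ Set.Ioi (0:ℝ)
        · rw [Set.indicator_of_mem h]
        · rw [Set.indicator_of_notMem h, hΦ]
          have : u + v ∉ Set.Ioi v := by
            simp only [Set.mem_Ioi, not_lt] at h ⊢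
            linarith
          exact (Set.indicator_of_notMem this _).symm
      have r : Set.indicator (Set.Ioi (0:ℝ)) (fun w => Φ v w) = fun w => Φ v w := by
        ext w
        by_cases h : w ∈ Set.Ioi (0:ℝ)
        · rw [Set.indicator_of_mem h]
        · rw [Set.indicator_of_notMem h, hΦ]
          have : w ∉ Set.Ioi v := by
            simp only [Set.mem_Ioi, not_lt] at h ⊢
            have hv' : (0:ℝ) < v := hv
            linarith
          exact (Set.indicator_of_notMem this _).symm
      rw [l, r]
      exact (integral_add_right_eq_self (fun u => Φ v u) v).symm
    rw [htrans]
    apply setIntegral_congr_fun measurableSet_Ioi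
    intro u hu
    have hmem : u + v ∈ Set.Ioi v := by
      have hu' : (0:ℝ) < u := hu
      simp only [Set.mem_Ioi]
      linarith
    rw [hΦ]
    simp only
    rw [Set.indicator_of_mem hmem]
    have harg : u + v - v = u := by ring
    rw [harg, hE]
    simp only
    push_cast
    rw [show (-(s:ℂ) * ((u:ℂ) + (v:ℂ))) = -(s:ℂ) * u + -(s:ℂ) * v by ring, Complex.exp_add]
    ring
  have step2 : ∫ v in Set.Ioi (0:ℝ), ∫ w in Set.Ioi (0:ℝ), Φ v w
      = ∫ w in Set.Ioi (0:ℝ), ∫ v in Set.Ioi (0:ℝ), Φ v w := integral_integral_swap hΦint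
  have step3 : ∫ w in Set.Ioi (0:ℝ), ∫ v in Set.Ioi (0:ℝ), Φ v w
      = ∫ w in Set.Ioi (0:ℝ), E w * ∫ v in (0:ℝ)..w, f v * f (w - v) := by
    apply setIntegral_congr_fun measurableSet_Ioi
    intro w hw
    have hind : (fun v => Φ v w)
        = Set.indicator (Set.Iio w) (fun v => E w * f v * f (w - v)) := by
      ext v
      by_cases h : v < w
      · rw [Set.indicator_of_mem (Set.mem_Iio.2 h), hΦ]
        simp only
        rw [Set.indicator_of_mem (Set.mem_Ioi.2 h)]
      · rw [Set.indicator_of_notMem (by simpa using h), hΦ]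
        simp only
        rw [Set.indicator_of_notMem (by simpa using h)]
    simp only
    rw [hind, setIntegral_indicator measurableSet_Iio, Set.Ioi_inter_Iio,
      intervalIntegral.integral_of_le (le_of_lt hw), integral_Ioc_eq_integral_Ioo,
      ← integral_const_mul]
    apply setIntegral_congr_fun measurableSet_Ioo
    intro v hv
    ring
  rw [step1, step2, step3]

/-- If the characteristic function `ψ` of a probability measure on `ℝ^d`
satisfies `ψ(t) = ∫₀¹ ψ(√u t) ψ(√(1-u) t) du`, then for fixed `a` the Laplace transform
`χ_a(s) = ∫₀^∞ e^{-sw} ψ(√w a) dw` is differentiable on `(0, ∞)` and satisfies the Riccati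
equation `χ_a'(s) = -χ_a(s)²`. -/
theorem laplace_transform_riccati_of_integral_equation
    (d : ℕ) (hd : 1 ≤ d)
    (μ : Measure (EuclideanSpace ℝ (Fin d))) (hμ : IsProbabilityMeasure μ)
    (ψ : EuclideanSpace ℝ (Fin d) → ℂ)
    (hψ : ∀ t, ψ t = ∫ x, Complex.exp ((⟪t, x⟫ : ℝ) * Complex.I) ∂ μ)
    (heq : ∀ t, ψ t = ∫ u in (0:ℝ)..1, ψ (Real.sqrt u • t) * ψ (Real.sqrt (1 - u) • t))
    (a : EuclideanSpace ℝ (Fin d))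
    (χ : ℝ → ℂ)
    (hχ : ∀ s : ℝ, χ s = ∫ w in Set.Ioi (0:ℝ), Complex.exp (-(s : ℂ) * (w : ℂ)) * ψ (Real.sqrt w • a)) :
    ∀ s : ℝ, 0 < s → HasDerivAt χ (-(χ s) ^ 2) s := by
  haveI := hμ
  intro s hs
  have hfcont : Continuous fun w : ℝ => ψ (Real.sqrt w • a) :=
    (psi_cont μ ψ hψ).comp (Real.continuous_sqrt.smul continuous_const)
  have hfb : ∀ w : ℝ, ‖ψ (Real.sqrt w • a)‖ ≤ 1 := fun w => psi_bound μ ψ hψ _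
  have hder := hasDeriv_laplace (fun w => ψ (Real.sqrt w • a)) hfcont hfb hs
  have hder' : HasDerivAt χ
      (∫ w in Set.Ioi (0:ℝ), -(w:ℂ) * Complex.exp (-(s:ℂ) * w) * ψ (Real.sqrt w • a)) s := by
    have hfun : χ = fun x : ℝ =>
        ∫ w in Set.Ioi (0:ℝ), Complex.exp (-(x:ℂ) * w) * ψ (Real.sqrt w • a) := funext hχ
    rw [hfun]
    exact hder
  have hval : (∫ w in Set.Ioi (0:ℝ), -(w:ℂ) * Complex.exp (-(s:ℂ) * w) * ψ (Real.sqrt w • a))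
      = -(χ s) ^ 2 := by
    have h1 : (χ s) ^ 2 = ∫ w in Set.Ioi (0:ℝ), Complex.exp (-(s:ℂ) * w)
        * ∫ v in (0:ℝ)..w, ψ (Real.sqrt v • a) * ψ (Real.sqrt (w - v) • a) := by
      rw [hχ s]
      exact laplace_sq (fun w => ψ (Real.sqrt w • a)) hfcont hfb hs
    calc ∫ w in Set.Ioi (0:ℝ), -(w:ℂ) * Complex.exp (-(s:ℂ) * w) * ψ (Real.sqrt w • a)
        = - ∫ w in Set.Ioi (0:ℝ), Complex.exp (-(s:ℂ) * w)
            * ((w:ℂ) * ψ (Real.sqrt w • a)) := by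
          rw [← integral_neg]
          apply setIntegral_congr_fun measurableSet_Ioi
          intro w hw
          simp only
          ring
      _ = - ∫ w in Set.Ioi (0:ℝ), Complex.exp (-(s:ℂ) * w)
            * ∫ v in (0:ℝ)..w, ψ (Real.sqrt v • a) * ψ (Real.sqrt (w - v) • a) := by
          congr 1
          apply setIntegral_congr_fun measurableSet_Ioi
          intro w hw
          simp only
          rw [conv_id ψ heq a hw]
      _ = -(χ s) ^ 2 := by rw [← h1]
  rw [← hval]
  exact hder'
end
end

section
/- For every integer k ≥ 2, Σ_{j=1}^{k−1} j·θ_j = 1 − k·e_k(1)^{−1}·∫₀¹ e_k(y) dy; equivalently, 2·∫₀¹ (1−y)·(y + 2y² + … + (k−1)·y^{k−1})·e_k(y) dy = e_k(1) − k·∫₀¹ e_k(y) dy. -/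
open MeasureTheory Filter Finset
open scoped Topology RealInnerProductSpace

noncomputable section

/-- `e_k(y) = exp(2(y + y²/2 + … + y^{k-1}/(k-1)))`. -/
def ek (k : ℕ) (y : ℝ) : ℝ :=
  Real.exp (2 * ∑ i ∈ Finset.range (k - 1), y ^ (i + 1) / (i + 1))

/-- `θ_j = 2 e_k(1)⁻¹ ∫₀¹ (1-y) y^j e_k(y) dy`. -/
def theta (k j : ℕ) : ℝ :=
  2 * (ek k 1)⁻¹ * ∫ y in (0:ℝ)..1, (1 - y) * y ^ j * ek k y

lemma poly_id (k : ℕ) (hk : 1 ≤ k) (y : ℝ) :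
    ((k:ℝ) - 2*((k:ℝ)-1)*y) + ((k:ℝ)*y - ((k:ℝ)-1)*y^2) * (2 * ∑ i ∈ range (k-1), y^i)
      = 2*(1-y) * (∑ j ∈ Ico 1 k, (j:ℝ)*y^j) + k := by
  induction k, hk using Nat.le_induction with
  | base => simp
  | succ n hn ih =>
    have h1 : n + 1 - 1 = (n - 1) + 1 := by omega
    rw [h1, sum_range_succ, sum_Ico_succ_top hn]
    have h2 : y ^ n = y ^ (n-1) * y := by
      rw [← pow_succ, Nat.sub_add_cancel hn]
    have hg : (∑ i ∈ range (n-1), y^i) * (y-1) = y^(n-1) - 1 := geom_sum_mul y (n-1)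
    push_cast
    rw [h2]
    linear_combination ih - 2*y*hg

lemma ek_hasDerivAt (k : ℕ) (y : ℝ) :
    HasDerivAt (ek k) ((2 * ∑ i ∈ range (k-1), y^i) * ek k y) y := by
  have h : HasDerivAt (fun y : ℝ => 2 * ∑ i ∈ range (k-1), y ^ (i+1) / (i+1))
      (2 * ∑ i ∈ range (k-1), y ^ i) y := by
    refine (HasDerivAt.fun_sum fun i _ => ?_).const_mul 2
    have : HasDerivAt (fun y : ℝ => y ^ (i+1)) ((i+1) * y ^ i) y := by
      simpa using hasDerivAt_pow (i+1) y
    have h2 := this.div_const ((i:ℝ)+1)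
    have hne : ((i:ℝ)+1) ≠ 0 := by positivity
    simpa [mul_comm, mul_div_assoc, div_self hne] using h2
  rw [show ek k = fun x : ℝ => Real.exp (2 * ∑ i ∈ range (k-1), x ^ (i+1) / ((i:ℝ)+1)) from rfl]
  simpa [ek, mul_comm] using h.exp

lemma ek_cont (k : ℕ) : Continuous (ek k) := by
  unfold ek; fun_prop

lemma sum_cont (k : ℕ) : Continuous (fun y : ℝ => ∑ j ∈ Ico 1 k, (j:ℝ)*y^j) :=
  continuous_finset_sum _ fun j _ => continuous_const.mul (continuous_pow j)

lemma cont_aux (k : ℕ) :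
    Continuous (fun y : ℝ => (2*(1-y) * (∑ j ∈ Ico 1 k, (j:ℝ)*y^j) + k) * ek k y) :=
  (((continuous_const.mul (continuous_const.sub continuous_id)).mul (sum_cont k)).add
    continuous_const).mul (ek_cont k)

lemma F_hasDerivAt (k : ℕ) (hk : 1 ≤ k) (y : ℝ) :
    HasDerivAt (fun y : ℝ => ((k:ℝ)*y - ((k:ℝ)-1)*y^2) * ek k y)
      ((2*(1-y) * (∑ j ∈ Ico 1 k, (j:ℝ)*y^j) + k) * ek k y) y := by
  have hp : HasDerivAt (fun y : ℝ => (k:ℝ)*y - ((k:ℝ)-1)*y^2)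
      ((k:ℝ) - 2*((k:ℝ)-1)*y) y := by
    have h1 := (hasDerivAt_id y).const_mul (k:ℝ)
    have h2 := ((hasDerivAt_pow 2 y).const_mul ((k:ℝ)-1))
    simpa [Pi.sub_def, mul_comm, mul_assoc, mul_left_comm] using h1.sub h2
  have := (hp.mul (ek_hasDerivAt k y) :
    HasDerivAt (fun y : ℝ => ((k:ℝ)*y - ((k:ℝ)-1)*y^2) * ek k y) _ y)
  rw [← poly_id k hk y]
  refine HasDerivAt.congr_deriv this ?_
  ring

lemma ftc_key (k : ℕ) (hk : 1 ≤ k) :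
    (∫ y in (0:ℝ)..1, (2*(1-y) * (∑ j ∈ Ico 1 k, (j:ℝ)*y^j) + k) * ek k y) = ek k 1 := by
  have := intervalIntegral.integral_eq_sub_of_hasDerivAt
    (f := fun y : ℝ => ((k:ℝ)*y - ((k:ℝ)-1)*y^2) * ek k y)
    (fun y _ => F_hasDerivAt k hk y)
    ((cont_aux k).intervalIntegrable 0 1)
  rw [this]; ring

/-- **(4.6).** `Σ_{j=1}^{k-1} j θ_j = 1 - k e_k(1)⁻¹ ∫₀¹ e_k(y) dy`; equivalently,
`2 ∫₀¹ (1-y)(y + 2y² + … + (k-1) y^{k-1}) e_k(y) dy = e_k(1) - k ∫₀¹ e_k(y) dy`. -/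
theorem sum_j_theta_eq
    (k : ℕ) (hk : 2 ≤ k) :
    (∑ j ∈ Finset.Ico 1 k, (j : ℝ) * theta k j)
        = 1 - (k : ℝ) * (ek k 1)⁻¹ * ∫ y in (0:ℝ)..1, ek k y ∧
    (2 * ∫ y in (0:ℝ)..1, (1 - y) * (∑ j ∈ Finset.Ico 1 k, (j : ℝ) * y ^ j) * ek k y)
        = ek k 1 - (k : ℝ) * ∫ y in (0:ℝ)..1, ek k y := by
  have hk1 : 1 ≤ k := by omega
  have hint1 : IntervalIntegrable
      (fun y : ℝ => 2*(1-y) * (∑ j ∈ Ico 1 k, (j:ℝ)*y^j) * ek k y) volume 0 1 :=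
    (((continuous_const.mul (continuous_const.sub continuous_id)).mul (sum_cont k)).mul
      (ek_cont k)).intervalIntegrable 0 1
  have hint2 : IntervalIntegrable (fun y : ℝ => (k:ℝ) * ek k y) volume 0 1 :=
    (continuous_const.mul (ek_cont k)).intervalIntegrable 0 1
  have hsplit : (∫ y in (0:ℝ)..1, (2*(1-y) * (∑ j ∈ Ico 1 k, (j:ℝ)*y^j) + k) * ek k y)
      = (∫ y in (0:ℝ)..1, 2*(1-y) * (∑ j ∈ Ico 1 k, (j:ℝ)*y^j) * ek k y)
        + (k:ℝ) * ∫ y in (0:ℝ)..1, ek k y := by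
    rw [← intervalIntegral.integral_const_mul, ← intervalIntegral.integral_add hint1 hint2]
    congr 1; ext y; ring
  have key : (∫ y in (0:ℝ)..1, 2*(1-y) * (∑ j ∈ Ico 1 k, (j:ℝ)*y^j) * ek k y)
      = ek k 1 - (k:ℝ) * ∫ y in (0:ℝ)..1, ek k y := by
    have := ftc_key k hk1
    rw [hsplit] at this; linarith
  have hpull : (∫ y in (0:ℝ)..1, 2*(1-y) * (∑ j ∈ Ico 1 k, (j:ℝ)*y^j) * ek k y)
      = 2 * ∫ y in (0:ℝ)..1, (1-y) * (∑ j ∈ Ico 1 k, (j:ℝ)*y^j) * ek k y := by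
    rw [← intervalIntegral.integral_const_mul]
    congr 1; ext y; ring
  constructor
  · -- sum of thetas
    have hswap : (∑ j ∈ Ico 1 k, (j:ℝ) * ∫ y in (0:ℝ)..1, (1 - y) * y ^ j * ek k y)
        = ∫ y in (0:ℝ)..1, (1-y) * (∑ j ∈ Ico 1 k, (j:ℝ)*y^j) * ek k y := by
      have step : ∀ j ∈ Ico 1 k, (j:ℝ) * ∫ y in (0:ℝ)..1, (1 - y) * y ^ j * ek k y
          = ∫ y in (0:ℝ)..1, (j:ℝ) * ((1 - y) * y ^ j * ek k y) := fun j _ =>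
        (intervalIntegral.integral_const_mul _ _).symm
      rw [Finset.sum_congr rfl step, ← intervalIntegral.integral_finset_sum]
      · congr 1; ext y
        simp only [Finset.mul_sum, Finset.sum_mul]
        exact Finset.sum_congr rfl fun j _ => by ring
      · exact fun j _ => (continuous_const.mul (((continuous_const.sub continuous_id).mul
          (continuous_pow j)).mul (ek_cont k))).intervalIntegrable 0 1
    have hne : ek k 1 ≠ 0 := Real.exp_ne_zero _
    have : (∑ j ∈ Finset.Ico 1 k, (j : ℝ) * theta k j)
        = 2 * (ek k 1)⁻¹ * ∫ y in (0:ℝ)..1, (1-y) * (∑ j ∈ Ico 1 k, (j:ℝ)*y^j) * ek k y := by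
      rw [← hswap, mul_sum]
      exact Finset.sum_congr rfl fun j _ => by unfold theta; ring
    rw [this]
    have h2 : 2 * ∫ y in (0:ℝ)..1, (1-y) * (∑ j ∈ Ico 1 k, (j:ℝ)*y^j) * ek k y
        = ek k 1 - (k:ℝ) * ∫ y in (0:ℝ)..1, ek k y := by rw [← hpull, key]
    field_simp
    linarith [h2]
  · rw [← hpull, key]

end
end
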